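/- arXiv:2507.11090 — 2 statements merged into one kernel-verified Lean document; each statement's English description precedes it below -/
import Mathlib

section
/- If an edge e is a follower of anchor x (i.e., t^{x}(e) > t(e)), then t(e) ≥ t(x) is not required; however, if e and x do not lie in a common triangle, then there exists a sequence of triangles Δ_1,…,Δ_j in G with x ∈ Δ_1, e ∈ Δ_j, and consecutive triangles sharing an edge (i.e., e is triangle-connected to x). -/
variable {V : Type*}

/-- Support of an (unordered) edge in graph `H`: number of common neighbors. -/
noncomputable def esupp [Fintype V] (H : SimpleGraph V) : Sym2 V → ℕ :=
  Sym2.lift ⟨fun u v => Nat.card {w : V // H.Adj u w ∧ H.Adj v w},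
    fun _ _ => Nat.card_congr (Equiv.subtypeEquivRight fun _ => and_comm)⟩

/-- `H` is a subgraph of `G` in which every edge has support at least `k-2`. -/
def IsTrussSub [Fintype V] (G H : SimpleGraph V) (k : ℕ) : Prop :=
  H ≤ G ∧ ∀ e ∈ H.edgeSet, k - 2 ≤ esupp H e

/-- Trussness of an edge: the largest `k` such that some subgraph witnessing
the `k`-truss support condition contains it. -/
noncomputable def etruss [Fintype V] (G : SimpleGraph V) (e : Sym2 V) : ℕ :=
  sSup {k | ∃ H, IsTrussSub G H k ∧ e ∈ H.edgeSet}

/-- The `k`-truss of `G`: the maximal subgraph in which every edge has support `≥ k-2`. -/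
noncomputable def trussG [Fintype V] (G : SimpleGraph V) (k : ℕ) : SimpleGraph V :=
  sSup {H | IsTrussSub G H k}

/-- Anchored truss-subgraph: edges in the anchor set `A` are exempt from the
support constraint. -/
def IsATrussSub [Fintype V] (G H : SimpleGraph V) (A : Set (Sym2 V)) (k : ℕ) : Prop :=
  H ≤ G ∧ ∀ e ∈ H.edgeSet, e ∈ A ∨ k - 2 ≤ esupp H e

/-- Anchored trussness `t^A(e)`. -/
noncomputable def atruss [Fintype V] (G : SimpleGraph V) (A : Set (Sym2 V)) (e : Sym2 V) : ℕ :=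
  sSup {k | ∃ H, IsATrussSub G H A k ∧ e ∈ H.edgeSet}

/-- The anchored `k`-truss of `G` with anchor set `A`. -/
noncomputable def atrussGraph [Fintype V] (G : SimpleGraph V) (A : Set (Sym2 V)) (k : ℕ) :
    SimpleGraph V :=
  sSup {H | IsATrussSub G H A k}

/-- Trussness gain: total increment of trussness over all non-anchor edges. -/
noncomputable def TG [Fintype V] (G : SimpleGraph V) (A : Set (Sym2 V)) : ℕ :=
  ∑ e ∈ (G.edgeSet \ A).toFinite.toFinset, (atruss G A e - etruss G e)

/-- `a b c` form a triangle in `G`. -/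
def IsTri (G : SimpleGraph V) (a b c : V) : Prop := G.Adj a b ∧ G.Adj b c ∧ G.Adj a c

/-- The three edges of the triangle on `a b c`. -/
def triE (a b c : V) : Set (Sym2 V) := {s(a, b), s(b, c), s(a, c)}

/-- Two edges lie in a common triangle of `G`. -/
def ShareTri (G : SimpleGraph V) (e f : Sym2 V) : Prop :=
  ∃ a b c, IsTri G a b c ∧ e ∈ triE a b c ∧ f ∈ triE a b c

/-- Triangle connectivity: chain of triangles, consecutive ones sharing an edge. -/
def TriConn (G : SimpleGraph V) : Sym2 V → Sym2 V → Prop := Relation.TransGen (ShareTri G)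

/-- A `k`-truss component: a truss-subgraph whose edges are pairwise
triangle-connected within it, maximal with these properties. -/
def IsTrussComponent [Fintype V] (G S : SimpleGraph V) (k : ℕ) : Prop :=
  IsTrussSub G S k ∧
  (∀ e ∈ S.edgeSet, ∀ f ∈ S.edgeSet, e = f ∨ TriConn S e f) ∧
  ∀ S', IsTrussSub G S' k →
    (∀ e ∈ S'.edgeSet, ∀ f ∈ S'.edgeSet, e = f ∨ TriConn S' e f) → S ≤ S' → S' = S

section Aux

lemma esupp_mk [Fintype V] (H : SimpleGraph V) (u v : V) :
    esupp H s(u, v) = Nat.card {w : V // H.Adj u w ∧ H.Adj v w} := rfl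

lemma esupp_le_card [Fintype V] (H : SimpleGraph V) (f : Sym2 V) :
    esupp H f ≤ Fintype.card V := by
  induction f using Sym2.inductionOn with
  | hf u v =>
    rw [esupp_mk]
    classical
    rw [Nat.card_eq_fintype_card]
    exact Fintype.card_subtype_le _

lemma shareTri_mono {G H : SimpleGraph V} (h : H ≤ G) {e f : Sym2 V} :
    ShareTri H e f → ShareTri G e f := by
  rintro ⟨a, b, c, ⟨h1, h2, h3⟩, he, hf⟩
  exact ⟨a, b, c, ⟨h h1, h h2, h h3⟩, he, hf⟩

lemma shareTri_symm {G : SimpleGraph V} : Symmetric (ShareTri G) := by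
  rintro e f ⟨a, b, c, ht, he, hf⟩
  exact ⟨a, b, c, ht, hf, he⟩

lemma triConn_mono {G H : SimpleGraph V} (h : H ≤ G) {e f : Sym2 V} :
    TriConn H e f → TriConn G e f :=
  Relation.TransGen.mono (fun a b => @shareTri_mono V G H h a b) e f

lemma triConn_symm {G : SimpleGraph V} : Symmetric (TriConn G) := by
  intro e f h
  induction h with
  | single h => exact Relation.TransGen.single (shareTri_symm h)
  | tail _ h2 ih => exact Relation.TransGen.trans (Relation.TransGen.single (shareTri_symm h2)) ih

lemma bdd_truss [Fintype V] (G : SimpleGraph V) (e : Sym2 V) :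
    BddAbove {k | ∃ H, IsTrussSub G H k ∧ e ∈ H.edgeSet} := by
  refine ⟨Fintype.card V + 2, ?_⟩
  rintro k ⟨H, ⟨_, hsup⟩, heH⟩
  have h1 := hsup e heH
  have h2 := esupp_le_card H e
  omega

lemma bdd_atruss [Fintype V] (G : SimpleGraph V) (x e : Sym2 V) (hne : e ≠ x) :
    BddAbove {k | ∃ H, IsATrussSub G H {x} k ∧ e ∈ H.edgeSet} := by
  refine ⟨Fintype.card V + 2, ?_⟩
  rintro k ⟨H, ⟨_, hsup⟩, heH⟩
  rcases hsup e heH with h | h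
  · exact absurd h hne
  · have h2 := esupp_le_card H e
    omega

end Aux

theorem stmt7 [Fintype V] (G : SimpleGraph V) (x e : Sym2 V)
    (hx : x ∈ G.edgeSet) (he : e ∈ G.edgeSet) (hne : e ≠ x)
    (hf : etruss G e < atruss G {x} e) (hnc : ¬ ShareTri G x e) :
    TriConn G x e := by
  classical
  set S : Set ℕ := {k | ∃ H, IsATrussSub G H {x} k ∧ e ∈ H.edgeSet} with hS
  have hSne : S.Nonempty := by
    by_contra hcon
    rw [Set.not_nonempty_iff_eq_empty] at hcon
    have : atruss G {x} e = 0 := by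
      rw [atruss, ← hS, hcon]; simp
    omega
  have hmem : atruss G {x} e ∈ S := Nat.sSup_mem hSne (bdd_atruss G x e hne)
  set k := atruss G {x} e with hk
  obtain ⟨H, ⟨hHG, hsup⟩, heH⟩ := hmem
  set C : Set (Sym2 V) := {f | f ∈ H.edgeSet ∧ (f = e ∨ TriConn H e f)} with hC
  by_cases hxC : x ∈ C
  · obtain ⟨_, hcase⟩ := hxC
    rcases hcase with h | h
    · exact absurd h.symm hne
    · exact triConn_symm (triConn_mono hHG h)
  · -- x ∉ C: build ordinary truss witness, contradiction with hf
    exfalso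
    set H' : SimpleGraph V := SimpleGraph.fromEdgeSet C with hH'
    have hCsub : C ⊆ H.edgeSet := fun f hf => hf.1
    have hE' : H'.edgeSet = C := by
      rw [hH', SimpleGraph.edgeSet_fromEdgeSet]
      ext f
      simp only [Set.mem_diff, Set.mem_setOf_eq, and_iff_left_iff_imp]
      exact fun hfC => H.not_isDiag_of_mem_edgeSet (hCsub hfC)
    have hH'H : H' ≤ H := by
      intro a b hab
      rw [hH', SimpleGraph.fromEdgeSet_adj] at hab
      exact (hCsub hab.1 : _)
    -- key: every edge of a triangle through an edge in C is in C
    have hadj : ∀ u v w : V, s(u, v) ∈ C → H.Adj u w → H.Adj v w → H'.Adj u w := by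
      intro u v w huv huw hvw
      rw [hH', SimpleGraph.fromEdgeSet_adj]
      refine ⟨⟨huw, ?_⟩, huw.ne⟩
      have hTri : IsTri H u v w := ⟨(hCsub huv : _), hvw, huw⟩
      have hshare : ShareTri H s(u, v) s(u, w) := by
        refine ⟨u, v, w, hTri, ?_, ?_⟩ <;> simp [triE]
      rcases huv.2 with h | h
      · exact Or.inr (Relation.TransGen.single (h ▸ hshare))
      · exact Or.inr (Relation.TransGen.tail h hshare)
    have hsupp' : ∀ f ∈ H'.edgeSet, k - 2 ≤ esupp H' f := by
      intro f hfE
      rw [hE'] at hfE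
      have hfx : f ≠ x := fun h => hxC (h ▸ hfE)
      have hbase : k - 2 ≤ esupp H f := by
        rcases hsup f hfE.1 with h | h
        · exact absurd h hfx
        · exact h
      refine le_trans hbase (le_of_eq ?_)
      induction f using Sym2.inductionOn with
      | hf u v =>
        rw [esupp_mk, esupp_mk]
        refine Nat.card_congr (Equiv.subtypeEquivRight fun w => ?_)
        constructor
        · rintro ⟨h1, h2⟩
          have h1' := hadj u v w hfE h1 h2
          have h2' := hadj v u w (by rwa [Sym2.eq_swap] at hfE) h2 h1
          exact ⟨h1', h2'⟩
        · rintro ⟨h1, h2⟩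
          exact ⟨hH'H h1, hH'H h2⟩
    have heC : e ∈ C := ⟨heH, Or.inl rfl⟩
    have hkmem : k ∈ {k | ∃ H, IsTrussSub G H k ∧ e ∈ H.edgeSet} :=
      ⟨H', ⟨le_trans hH'H hHG, hsupp'⟩, hE' ▸ heC⟩
    have : k ≤ etruss G e := le_csSup (bdd_truss G e) hkmem
    omega
end

section
/- The trussness of each edge in a graph G equals the value k assigned by the peeling algorithm that, for k = 2,3,4,…, repeatedly removes any remaining edge of support ≤ k-2 (assigning it trussness k) and decrements the support of edges sharing a triangle with it; i.e., the peeling order yields the correct truss decomposition. -/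
variable {V : Type*}

lemma my_esupp_mono [Fintype V] {H H' : SimpleGraph V} (h : H ≤ H') (e : Sym2 V) :
    esupp H e ≤ esupp H' e := by
  induction e using Sym2.ind with
  | _ u v =>
    simp only [esupp, Sym2.lift_mk]
    exact Nat.card_le_card_of_injective
      (fun w => ⟨w.1, h w.2.1, h w.2.2⟩)
      (by intro a b hab
          have h2 := congrArg Subtype.val hab
          exact Subtype.ext h2)

lemma my_esupp_le_card [Fintype V] (H : SimpleGraph V) (e : Sym2 V) :
    esupp H e ≤ Fintype.card V := by
  induction e using Sym2.ind with
  | _ u v =>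
    simp only [esupp, Sym2.lift_mk]
    rw [← Nat.card_eq_fintype_card]
    exact Nat.card_le_card_of_injective Subtype.val Subtype.val_injective

lemma my_mem_take {α : Type*} {L : List α} {i : ℕ} {a : α} (h : a ∈ L.take i) :
    ∃ j, ∃ hj : j < L.length, j < i ∧ L.get ⟨j, hj⟩ = a := by
  obtain ⟨⟨j, hj⟩, hjeq⟩ := List.mem_iff_get.mp h
  have hj' : j < i ⊓ L.length := by simpa [List.length_take] using hj
  refine ⟨j, (lt_min_iff.mp hj').2, (lt_min_iff.mp hj').1, ?_⟩
  simpa [List.get_eq_getElem, List.getElem_take] using hjeq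
theorem stmt9 [Fintype V] (G : SimpleGraph V) (L : List (Sym2 V)) (t' : Sym2 V → ℕ)
    (hnd : L.Nodup) (hmem : ∀ e, e ∈ L ↔ e ∈ G.edgeSet)
    (hmono : L.Pairwise fun e f => t' e ≤ t' f)
    (h2 : ∀ e ∈ L, 2 ≤ t' e)
    (hrem : ∀ i (h : i < L.length),
      esupp (G.deleteEdges {e | e ∈ L.take i}) (L.get ⟨i, h⟩) ≤ t' (L.get ⟨i, h⟩) - 2)
    (hmin : ∀ i (h : i < L.length),
      (∀ j (hj : j < i), t' (L.get ⟨j, lt_trans hj h⟩) < t' (L.get ⟨i, h⟩)) →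
      ∀ f ∈ (G.deleteEdges {e | e ∈ L.take i}).edgeSet,
        t' (L.get ⟨i, h⟩) - 2 ≤ esupp (G.deleteEdges {e | e ∈ L.take i}) f) :
    ∀ e ∈ G.edgeSet, t' e = etruss G e := by
  classical
  intro e he
  have heL : e ∈ L := (hmem e).mpr he
  obtain ⟨⟨ie, hie⟩, hegt⟩ := List.mem_iff_get.mp heL
  have hmono' : ∀ (i j : Fin L.length), i < j → t' (L.get i) ≤ t' (L.get j) :=
    List.pairwise_iff_get.mp hmono
  have bdd : BddAbove {k | ∃ H, IsTrussSub G H k ∧ e ∈ H.edgeSet} := by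
    refine ⟨Fintype.card V + 2, ?_⟩
    rintro k ⟨H, ⟨_, hs⟩, heH⟩
    have h1 := hs e heH
    have hcard := my_esupp_le_card H e
    omega
  apply le_antisymm
  · -- t' e ≤ etruss G e
    have hQ : ∃ i, ∃ h : i < L.length, t' e ≤ t' (L.get ⟨i, h⟩) := ⟨ie, hie, by rw [hegt]⟩
    set i0 := Nat.find hQ with hi0def
    obtain ⟨hi0, hi0ge⟩ := Nat.find_spec hQ
    have hi0ge' : ∀ (h : i0 < L.length), t' e ≤ t' (L.get ⟨i0, h⟩) := fun h => hi0ge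
    have hnot : ∀ j, j < i0 → ∀ h : j < L.length, t' (L.get ⟨j, h⟩) < t' e := by
      intro j hj h
      have hmin' := Nat.find_min hQ hj
      push_neg at hmin'
      exact hmin' h
    have heHk : e ∈ (G.deleteEdges {f | f ∈ L.take i0}).edgeSet := by
      rw [SimpleGraph.edgeSet_deleteEdges]
      refine ⟨he, ?_⟩
      intro hmem'
      obtain ⟨j, hjlen, hji, hjeq⟩ := my_mem_take hmem'
      have := hnot j hji hjlen
      rw [hjeq] at this
      omega
    have hTS : IsTrussSub G (G.deleteEdges {f | f ∈ L.take i0}) (t' e) := by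
      refine ⟨SimpleGraph.deleteEdges_le _, ?_⟩
      intro f hf
      have hpre : ∀ j (hj : j < i0), t' (L.get ⟨j, lt_trans hj hi0⟩) < t' (L.get ⟨i0, hi0⟩) :=
        fun j hj => lt_of_lt_of_le (hnot j hj _) (hi0ge' hi0)
      have hsupp := hmin i0 hi0 hpre f hf
      have hge : t' e ≤ t' (L.get ⟨i0, hi0⟩) := hi0ge' hi0
      omega
    exact le_csSup bdd ⟨_, hTS, heHk⟩
  · -- etruss G e ≤ t' e
    show sSup {k | ∃ H, IsTrussSub G H k ∧ e ∈ H.edgeSet} ≤ t' e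
    have hne : {k | ∃ H, IsTrussSub G H k ∧ e ∈ H.edgeSet}.Nonempty :=
      ⟨0, G, ⟨le_refl G, fun f hf => by simp⟩, he⟩
    apply csSup_le hne
    rintro k ⟨H, ⟨hHG, hs⟩, heH⟩
    have hP : ∃ i, ∃ h : i < L.length, L.get ⟨i, h⟩ ∈ H.edgeSet :=
      ⟨ie, hie, by rw [hegt]; exact heH⟩
    obtain ⟨hi, hiH⟩ := Nat.find_spec hP
    set i := Nat.find hP with hidef
    have hle : H ≤ G.deleteEdges {f | f ∈ L.take i} := by
      rw [← SimpleGraph.edgeSet_subset_edgeSet]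
      intro f hf
      rw [SimpleGraph.edgeSet_deleteEdges]
      refine ⟨SimpleGraph.edgeSet_mono hHG hf, ?_⟩
      intro hmem'
      obtain ⟨j, hjlen, hji, hjeq⟩ := my_mem_take hmem'
      have hmin' := Nat.find_min hP hji
      push_neg at hmin'
      exact hmin' hjlen (hjeq ▸ hf)
    have hs1 : k - 2 ≤ esupp H (L.get ⟨i, hi⟩) := hs _ hiH
    have hs2 := my_esupp_mono hle (L.get ⟨i, hi⟩)
    have hs3 := hrem i hi
    have h2f : 2 ≤ t' (L.get ⟨i, hi⟩) := h2 _ (List.get_mem L ⟨i, hi⟩)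
    have hile : i ≤ ie := Nat.find_le ⟨hie, by rw [hegt]; exact heH⟩
    have hfin : t' (L.get ⟨i, hi⟩) ≤ t' e := by
      rcases lt_or_eq_of_le hile with hlt | heq
      · rw [← hegt]
        exact hmono' ⟨i, hi⟩ ⟨ie, hie⟩ hlt
      · rw [← hegt]
        subst heq
        exact le_refl _
    omega
end
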